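/- Let (U, U^ι) be a quantum symmetric pair of finite type with quasi-K matrix Υ = Σ_μ Υ_μ (Υ_0 = 1, Υ_μ ∈ U^+_μ). Then Δ(Υ) ∈ Υ ⊗ 1 + Σ_{0 ≠ μ ∈ ℕ𝕀} U ⊗ U^+_μ, where Δ is the comultiplication of U (computed in the appropriate completion of U ⊗ U). -/
import Mathlib


/-!
Statement 6 (Bao–Wang–Watanabe, display in the proof of Theorem 1).

Let `(U, U^ι)` be a quantum symmetric pair of finite type with quasi-K matrix
`Υ = Σ_μ Υ_μ` (`Υ_0 = 1`, `Υ_μ ∈ U⁺_μ`).  Then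
`Δ(Υ) ∈ Υ ⊗ 1 + Σ_{0 ≠ μ ∈ ℕ𝕀} U ⊗ U⁺_μ`, where `Δ` is the comultiplication of `U`.

Since `Υ = Σ_α Υ_α`, we state the honest componentwise version: for every `α`,
`Δ(Υ_α) - Υ_α ⊗ 1` lies in `Σ_{μ ≠ 0} U ⊗ U⁺_μ`.  The hypotheses record the
context: `Δ(E_i) = E_i ⊗ 1 + K̃_i ⊗ E_i`, the `E_i` generate the weight pieces
`U⁺_μ` (which are multiplicative, with `U⁺_0 = ℚ(q)·1` and `E_i ∈ U⁺_{α_i}`),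
and `Υ_μ ∈ U⁺_μ` with `Υ_0 = 1`.
-/

open scoped TensorProduct

set_option synthInstance.maxHeartbeats 1000000
set_option maxHeartbeats 1000000

noncomputable section

/-- The base field `ℚ(q)`. -/
abbrev Fq : Type := RatFunc ℚ

theorem statement_6
    -- the root datum `(𝕀, ·)` of finite type
    (I : Type) [Fintype I]
    -- the quantum group `U`
    (UU : Type) [Ring UU] [Algebra Fq UU]
    -- the weight pieces `U⁺_μ`
    (Uplus : (I →₀ ℤ) → Submodule Fq UU)
    (hU0 : Uplus 0 = Submodule.span Fq {(1 : UU)})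
    (hUplus_mul : ∀ (μ ν : I →₀ ℤ) (x y : UU),
      x ∈ Uplus μ → y ∈ Uplus ν → x * y ∈ Uplus (μ + ν))
    -- the comultiplication `Δ` and the generators `E_i`, `K̃_i`, with
    -- `Δ(E_i) = E_i ⊗ 1 + K̃_i ⊗ E_i`
    (comul : UU →ₐ[Fq] UU ⊗[Fq] UU)
    (E Kt : I → UU)
    (hcomulE : ∀ i, comul (E i) = E i ⊗ₜ[Fq] 1 + Kt i ⊗ₜ[Fq] E i)
    (hE : ∀ i, E i ∈ Uplus (Finsupp.single i 1))
    (hUgen : ∀ (μ : I →₀ ℤ), ∀ x ∈ Uplus μ, x ∈ Algebra.adjoin Fq (Set.range E))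
    -- the components of the quasi-K matrix `Υ`: `Υ_0 = 1`, `Υ_μ ∈ U⁺_μ`
    (Υc : (I →₀ ℤ) → UU)
    (hΥ0 : Υc 0 = 1)
    (hΥwt : ∀ μ, Υc μ ∈ Uplus μ) :
    -- conclusion: `Δ(Υ) ∈ Υ ⊗ 1 + Σ_{0 ≠ μ ∈ ℕ𝕀} U ⊗ U⁺_μ`, componentwise
    ∀ α : I →₀ ℤ, comul (Υc α) - Υc α ⊗ₜ[Fq] 1 ∈
      Submodule.span Fq {z : UU ⊗[Fq] UU |
        ∃ μ : I →₀ ℤ, μ ≠ 0 ∧ (∀ i, 0 ≤ μ i) ∧ ∃ x : UU, ∃ y ∈ Uplus μ, z = x ⊗ₜ[Fq] y} := by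

  -- abbreviation for the target submodule
  set M : Submodule Fq (UU ⊗[Fq] UU) :=
      Submodule.span Fq {z : UU ⊗[Fq] UU |
        ∃ μ : I →₀ ℤ, μ ≠ 0 ∧ (∀ i, 0 ≤ μ i) ∧ ∃ x : UU, ∃ y ∈ Uplus μ, z = x ⊗ₜ[Fq] y}
    with hM
  -- left multiplication by `a ⊗ 1` preserves `M`
  have hlmul : ∀ (a : UU), ∀ z ∈ M, (a ⊗ₜ[Fq] (1 : UU)) * z ∈ M := by
    intro a z hz
    induction hz using Submodule.span_induction with
    | mem w hw =>
      obtain ⟨μ, hμ0, hμpos, x, y, hy, rfl⟩ := hw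
      rw [Algebra.TensorProduct.tmul_mul_tmul, one_mul]
      exact Submodule.subset_span ⟨μ, hμ0, hμpos, a * x, y, hy, rfl⟩
    | zero => simpa using (Submodule.zero_mem M)
    | add u v hu hv hu' hv' => rw [mul_add]; exact Submodule.add_mem M hu' hv'
    | smul c u hu hu' => rw [mul_smul_comm]; exact Submodule.smul_mem M c hu'
  -- right multiplication by `b ⊗ 1` preserves `M`
  have hrmul : ∀ (b : UU), ∀ z ∈ M, z * (b ⊗ₜ[Fq] (1 : UU)) ∈ M := by
    intro b z hz
    induction hz using Submodule.span_induction with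
    | mem w hw =>
      obtain ⟨μ, hμ0, hμpos, x, y, hy, rfl⟩ := hw
      rw [Algebra.TensorProduct.tmul_mul_tmul, mul_one]
      exact Submodule.subset_span ⟨μ, hμ0, hμpos, x * b, y, hy, rfl⟩
    | zero => simpa using (Submodule.zero_mem M)
    | add u v hu hv hu' hv' => rw [add_mul]; exact Submodule.add_mem M hu' hv'
    | smul c u hu hu' => rw [smul_mul_assoc]; exact Submodule.smul_mem M c hu'
  -- `M` is closed under multiplication
  have hmul : ∀ z ∈ M, ∀ w ∈ M, z * w ∈ M := by
    intro z hz
    induction hz using Submodule.span_induction with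
    | mem u hu =>
      intro w hw
      induction hw using Submodule.span_induction with
      | mem v hv =>
        obtain ⟨μ, hμ0, hμpos, x, y, hy, rfl⟩ := hu
        obtain ⟨ν, hν0, hνpos, x', y', hy', rfl⟩ := hv
        rw [Algebra.TensorProduct.tmul_mul_tmul]
        refine Submodule.subset_span ⟨μ + ν, ?_, ?_, x * x', y * y',
          hUplus_mul μ ν y y' hy hy', rfl⟩
        · intro h
          apply hμ0
          ext i
          have := DFunLike.congr_fun h i
          simp only [Finsupp.add_apply, Finsupp.zero_apply] at this
          have h1 := hμpos i
          have h2 := hνpos i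
          simp only [Finsupp.zero_apply]
          omega
        · intro i
          have h1 := hμpos i
          have h2 := hνpos i
          simp only [Finsupp.add_apply]
          omega
      | zero => simpa using (Submodule.zero_mem M)
      | add u' v' _ _ hu' hv' => rw [mul_add]; exact Submodule.add_mem M hu' hv'
      | smul c u' _ hu' => rw [mul_smul_comm]; exact Submodule.smul_mem M c hu'
    | zero => intro w hw; simpa using (Submodule.zero_mem M)
    | add u v hu hv hu' hv' =>
      intro w hw; rw [add_mul]; exact Submodule.add_mem M (hu' w hw) (hv' w hw)
    | smul c u hu hu' =>
      intro w hw; rw [smul_mul_assoc]; exact Submodule.smul_mem M c (hu' w hw)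
  -- key claim: for every element of the subalgebra generated by the `E i`,
  -- `comul x - x ⊗ 1 ∈ M`
  have key : ∀ x ∈ Algebra.adjoin Fq (Set.range E), comul x - x ⊗ₜ[Fq] (1 : UU) ∈ M := by
    intro x hx
    induction hx using Algebra.adjoin_induction with
    | mem x hx =>
      obtain ⟨i, rfl⟩ := hx
      rw [hcomulE i]
      have : E i ⊗ₜ[Fq] (1 : UU) + Kt i ⊗ₜ[Fq] E i - E i ⊗ₜ[Fq] (1 : UU)
          = Kt i ⊗ₜ[Fq] E i := by abel
      rw [this]
      refine Submodule.subset_span ⟨Finsupp.single i 1, ?_, ?_, Kt i, E i, hE i, rfl⟩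
      · intro h
        have := DFunLike.congr_fun h i
        simp at this
      · intro j
        rcases eq_or_ne j i with rfl | hji
        · simp
        · classical
          rw [Finsupp.single_apply]
          split <;> norm_num
    | algebraMap r =>
      rw [AlgHom.commutes]
      have : (algebraMap Fq (UU ⊗[Fq] UU)) r = (algebraMap Fq UU r) ⊗ₜ[Fq] (1 : UU) := by
        simp [Algebra.TensorProduct.algebraMap_apply]
      rw [this, sub_self]
      exact Submodule.zero_mem M
    | add a b ha hb ha' hb' =>
      rw [map_add]
      have : comul a + comul b - (a + b) ⊗ₜ[Fq] (1 : UU)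
          = (comul a - a ⊗ₜ[Fq] (1 : UU)) + (comul b - b ⊗ₜ[Fq] (1 : UU)) := by
        rw [TensorProduct.add_tmul]; abel
      rw [this]
      exact Submodule.add_mem M ha' hb'
    | mul a b ha hb ha' hb' =>
      rw [map_mul]
      have hca : comul a = a ⊗ₜ[Fq] (1 : UU) + (comul a - a ⊗ₜ[Fq] (1 : UU)) := by abel
      have hcb : comul b = b ⊗ₜ[Fq] (1 : UU) + (comul b - b ⊗ₜ[Fq] (1 : UU)) := by abel
      rw [hca, hcb]
      have expand : (a ⊗ₜ[Fq] (1 : UU) + (comul a - a ⊗ₜ[Fq] (1 : UU))) *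
          (b ⊗ₜ[Fq] (1 : UU) + (comul b - b ⊗ₜ[Fq] (1 : UU))) - (a * b) ⊗ₜ[Fq] (1 : UU)
          = (a ⊗ₜ[Fq] (1 : UU)) * (comul b - b ⊗ₜ[Fq] (1 : UU))
            + (comul a - a ⊗ₜ[Fq] (1 : UU)) * (b ⊗ₜ[Fq] (1 : UU))
            + (comul a - a ⊗ₜ[Fq] (1 : UU)) * (comul b - b ⊗ₜ[Fq] (1 : UU)) := by
        have h1 : (a ⊗ₜ[Fq] (1 : UU)) * (b ⊗ₜ[Fq] (1 : UU)) = (a * b) ⊗ₜ[Fq] (1 : UU) := by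
          rw [Algebra.TensorProduct.tmul_mul_tmul, one_mul]
        rw [add_mul, mul_add, mul_add, h1]; abel
      rw [expand]
      exact Submodule.add_mem M
        (Submodule.add_mem M (hlmul a _ hb') (hrmul b _ ha'))
        (hmul _ ha' _ hb')
  intro α
  exact key (Υc α) (hUgen α (Υc α) (hΥwt α))


end
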